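/- Let n ≥ 1, let X be a real n×n matrix with all entries nonnegative, let γ > 0 with ‖X‖ < γ in the ℓ∞ operator norm, let β > 0, and let Q ∈ ℝⁿ be a vector with all entries nonnegative and Q ≠ 0. Then the steady-state vector H* = β·(γ·I − X)⁻¹ Q has all entries nonnegative and H* ≠ 0; that is, the steady state is non-trivial. -/
import Mathlib


open Matrix

attribute [local instance] Matrix.linftyOpNormedRing
attribute [local instance] Matrix.linftyOpNormedSpace

/-- For `n ≥ 1`, a real `n×n` matrix `X` with nonnegative entries,
`γ > 0` with `‖X‖ < γ` (ℓ∞ operator norm), `β > 0`, and a nonnegative nonzero vector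
`Q ∈ ℝⁿ`, the steady-state vector `H* = β • ((γ•I - X)⁻¹ *ᵥ Q)` has all entries
nonnegative and `H* ≠ 0`: the steady state is non-trivial. -/
theorem stmt3 {n : ℕ} (hn : 1 ≤ n) (X : Matrix (Fin n) (Fin n) ℝ)
    (hXnn : ∀ i j, 0 ≤ X i j) (γ : ℝ) (hγ : 0 < γ) (h : ‖X‖ < γ)
    (β : ℝ) (hβ : 0 < β) (Q : Fin n → ℝ) (hQnn : ∀ i, 0 ≤ Q i) (hQ : Q ≠ 0) :
    (∀ i, 0 ≤ (β • ((γ • (1 : Matrix (Fin n) (Fin n) ℝ) - X)⁻¹ *ᵥ Q)) i) ∧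
      β • ((γ • (1 : Matrix (Fin n) (Fin n) ℝ) - X)⁻¹ *ᵥ Q) ≠ 0 := by
  set A : Matrix (Fin n) (Fin n) ℝ := γ • (1 : Matrix (Fin n) (Fin n) ℝ) - X with hA
  set t : Matrix (Fin n) (Fin n) ℝ := γ⁻¹ • X with ht
  have htn : ‖t‖ < 1 := by
    rw [ht, norm_smul, norm_inv, Real.norm_of_nonneg hγ.le]
    rw [inv_mul_lt_iff₀ hγ, mul_one]
    exact h
  -- entries of t^k are nonneg
  have htpow : ∀ (k : ℕ) (i j : Fin n), 0 ≤ (t ^ k) i j := by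
    intro k
    induction k with
    | zero => intro i j; by_cases hij : i = j <;> simp [hij, Matrix.one_apply]
    | succ k ih =>
      intro i j
      rw [pow_succ, Matrix.mul_apply]
      refine Finset.sum_nonneg fun l _ => mul_nonneg (ih i l) ?_
      exact smul_nonneg (inv_nonneg.mpr hγ.le) (hXnn l j)
  set S : Matrix (Fin n) (Fin n) ℝ := ∑' k : ℕ, t ^ k with hS
  have hsum : Summable (fun k : ℕ => t ^ k) := summable_geometric_of_norm_lt_one htn
  -- entries of S are nonneg
  have hSnn : ∀ i j, 0 ≤ S i j := by
    intro i j
    -- entry evaluation is a continuous linear map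
    let E : Matrix (Fin n) (Fin n) ℝ →ₗ[ℝ] ℝ :=
      { toFun := fun M => M i j
        map_add' := fun M N => rfl
        map_smul' := fun c M => rfl }
    have hEc : Continuous E := E.continuous_of_finiteDimensional
    have hHS : HasSum (fun k : ℕ => (t ^ k) i j) (S i j) :=
      hsum.hasSum.map E hEc
    exact hasSum_le (fun k => htpow k i j) hasSum_zero hHS
  have hmul : (1 - t) * S = 1 := mul_neg_geom_series t htn
  -- A⁻¹ = γ⁻¹ • S
  have hAS : A * (γ⁻¹ • S) = 1 := by
    have : A = γ • (1 - t) := by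
      rw [hA, ht, smul_sub, smul_smul, mul_inv_cancel₀ hγ.ne', one_smul]
    rw [this, smul_mul_assoc, mul_smul_comm, hmul, smul_smul,
      mul_inv_cancel₀ hγ.ne', one_smul]
  have hAinv : A⁻¹ = γ⁻¹ • S := inv_eq_right_inv hAS
  have hAinvnn : ∀ i j, 0 ≤ A⁻¹ i j := by
    intro i j
    rw [hAinv]
    exact smul_nonneg (inv_nonneg.mpr hγ.le) (hSnn i j)
  constructor
  · intro i
    simp only [Pi.smul_apply, smul_eq_mul]
    refine mul_nonneg hβ.le ?_
    rw [mulVec, dotProduct]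
    exact Finset.sum_nonneg fun j _ => mul_nonneg (hAinvnn i j) (hQnn j)
  · intro hzero
    have hv : A⁻¹ *ᵥ Q = 0 := by
      have := smul_eq_zero.mp hzero
      rcases this with hb | hv
      · exact absurd hb hβ.ne'
      · exact hv
    have : Q = 0 := by
      have h1 : A *ᵥ (A⁻¹ *ᵥ Q) = Q := by
        rw [mulVec_mulVec, Matrix.mul_nonsing_inv, one_mulVec]
        exact Matrix.isUnit_det_of_right_inverse hAS
      rw [hv, mulVec_zero] at h1
      exact h1.symm
    exact hQ this
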